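/- If the maximum of the squared norm of the second fundamental form satisfies the differential inequality d/dt (max |A|^2) ≤ 2 (max |A|^2)^2 on [0,T) and max |A|^2 blows up as t → T, then max_{M_t} |A| ≥ 1/(2(T−t))^{1/2} for all t < T; in particular any nonnegative function u on [0,T) with u' ≤ 2u^2 and u(t) → ∞ as t → T satisfies u(t) ≥ 1/(2(T−t)). -/

import Mathlib

open Filter Set MeasureTheory intervalIntegral

/-- Huisken's blow-up rate lemma, ODE comparison core: if `u = max_{M_t} |A|^2`
satisfies `u' ≤ 2 u^2` on `[0,T)` and blows up as `t → T⁻`, then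
`u t ≥ 1/(2(T-t))`, i.e. `max |A| ≥ (2(T-t))^{-1/2}`. -/
theorem mcf_blowup_rate (T : ℝ) (hT : 0 < T) (u u' : ℝ → ℝ)
    (hderiv : ∀ t ∈ Set.Ico (0:ℝ) T, HasDerivAt u (u' t) t)
    (hnonneg : ∀ t ∈ Set.Ico (0:ℝ) T, 0 ≤ u t)
    (hineq : ∀ t ∈ Set.Ico (0:ℝ) T, u' t ≤ 2 * (u t) ^ 2)
    (hblow : Tendsto u (nhdsWithin T (Set.Iio T)) atTop) :
    ∀ t ∈ Set.Ico (0:ℝ) T,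
      1 / (2 * (T - t)) ≤ u t ∧ 1 / Real.sqrt (2 * (T - t)) ≤ Real.sqrt (u t) := by
  have hcont : ∀ t ∈ Set.Ico (0:ℝ) T, ContinuousAt u t := fun t ht =>
    (hderiv t ht).continuousAt
  have key : ∀ t ∈ Set.Ico (0:ℝ) T, 1 / (2 * (T - t)) ≤ u t := by
    intro t₀ ht₀
    by_contra hlt
    push_neg at hlt
    have hTt₀ : 0 < T - t₀ := sub_pos.2 ht₀.2
    have h2T : (0:ℝ) < 2 * (T - t₀) := by linarith
    have hu₀ : 0 ≤ u t₀ := hnonneg _ ht₀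
    have hε : 0 < 1 - u t₀ * (2 * (T - t₀)) := by
      have := (lt_div_iff₀ h2T).mp hlt
      linarith
    set ε : ℝ := 1 - u t₀ * (2 * (T - t₀)) with hεdef
    set δ : ℝ := ε / (u t₀ + 1) with hδdef
    have hδ : 0 < δ := div_pos hε (by linarith)
    have hδε : δ * (u t₀ + 1) = ε := div_mul_cancel₀ _ (by positivity)
    -- w(t₀) < 0
    have hw₀ : u t₀ * (δ + 2 * (T - t₀)) - 1 < 0 := by nlinarith
    set w : ℝ → ℝ := fun t => u t * (δ + 2 * (T - t)) - 1 with hwdef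
    set U : ℝ → ℝ := fun t => ∫ s in t₀..t, 2 * u s with hUdef
    set g : ℝ → ℝ := fun t => w t * Real.exp (-(U t)) with hgdef
    -- main claim: u t * δ < 1 on [t₀, T)
    have main : ∀ t₁ ∈ Set.Ico t₀ T, u t₁ * δ < 1 := by
      intro t₁ ht₁
      rcases eq_or_lt_of_le ht₁.1 with rfl | ht₀₁
      · nlinarith
      have hsub : Set.Icc t₀ t₁ ⊆ Set.Ico (0:ℝ) T := fun x hx =>
        ⟨le_trans ht₀.1 hx.1, lt_of_le_of_lt hx.2 ht₁.2⟩
      have hucont : ContinuousOn u (Set.Icc t₀ t₁) := fun x hx =>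
        (hcont x (hsub hx)).continuousWithinAt
      have h2ucont : ContinuousOn (fun s => 2 * u s) (Set.Icc t₀ t₁) :=
        continuousOn_const.mul hucont
      have hint : ∀ x ∈ Set.Icc t₀ t₁, IntervalIntegrable (fun s => 2 * u s) volume t₀ x := by
        intro x hx
        apply ContinuousOn.intervalIntegrable
        rw [Set.uIcc_of_le hx.1]
        exact h2ucont.mono (Set.Icc_subset_Icc le_rfl hx.2)
      have hUcont : ContinuousOn U (Set.Icc t₀ t₁) := by
        have := continuousOn_primitive_interval (μ := volume) (f := fun s => 2 * u s)
          (a := t₀) (b := t₁) ?_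
        · rwa [Set.uIcc_of_le ht₀₁.le] at this
        · rw [Set.uIcc_of_le ht₀₁.le]
          exact h2ucont.integrableOn_compact isCompact_Icc
      have hwcont : ContinuousOn w (Set.Icc t₀ t₁) :=
        (hucont.mul (continuousOn_const.add
          (continuousOn_const.mul (continuousOn_const.sub continuousOn_id)))).sub
          continuousOn_const
      have hgcont : ContinuousOn g (Set.Icc t₀ t₁) :=
        hwcont.mul (hUcont.neg.rexp)
      -- derivative of g on the interior
      have hgderiv : ∀ x ∈ Set.Ioo t₀ t₁, HasDerivAt g
          ((u' x * (δ + 2 * (T - x)) + u x * (-2)) * Real.exp (-(U x)) +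
            w x * (Real.exp (-(U x)) * -(2 * u x))) x := by
        intro x hx
        have hxm : x ∈ Set.Ico (0:ℝ) T := hsub ⟨hx.1.le, hx.2.le⟩
        have hU' : HasDerivAt U (2 * u x) x := by
          apply integral_hasDerivAt_right (hint x ⟨hx.1.le, hx.2.le⟩)
          · exact ⟨Set.Ioo t₀ t₁, Ioo_mem_nhds hx.1 hx.2,
              ((h2ucont.mono Set.Ioo_subset_Icc_self).aestronglyMeasurable
                measurableSet_Ioo)⟩
          · exact continuousAt_const.mul (hcont x hxm)
        have hw' : HasDerivAt w (u' x * (δ + 2 * (T - x)) + u x * (-2)) x := by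
          have h1 : HasDerivAt (fun t => δ + 2 * (T - t)) (-2) x := by
            have := (((hasDerivAt_id x).const_sub T).const_mul 2).const_add δ
            simpa using this
          simpa [hwdef] using ((hderiv x hxm).mul h1).sub_const 1
        exact hw'.mul (hU'.neg.exp)
      have hganti : AntitoneOn g (Set.Icc t₀ t₁) := by
        apply antitoneOn_of_deriv_nonpos (convex_Icc t₀ t₁) hgcont
        · intro x hx
          rw [interior_Icc] at hx
          exact (hgderiv x hx).differentiableAt.differentiableWithinAt
        · intro x hx
          rw [interior_Icc] at hx
          have hxm : x ∈ Set.Ico (0:ℝ) T := hsub ⟨hx.1.le, hx.2.le⟩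
          rw [(hgderiv x hx).deriv]
          have hP : 0 ≤ δ + 2 * (T - x) := by
            have : x < T := hxm.2
            linarith [hδ.le]
          have h1 : u' x - 2 * (u x) ^ 2 ≤ 0 := by linarith [hineq x hxm]
          have he : 0 < Real.exp (-(U x)) := Real.exp_pos _
          have hcalc : (u' x * (δ + 2 * (T - x)) + u x * (-2)) * Real.exp (-(U x)) +
              w x * (Real.exp (-(U x)) * -(2 * u x)) =
              (u' x - 2 * (u x) ^ 2) * (δ + 2 * (T - x)) * Real.exp (-(U x)) := by
            simp only [hwdef]; ring
          rw [hcalc]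
          have := mul_nonpos_of_nonpos_of_nonneg h1 hP
          exact mul_nonpos_of_nonpos_of_nonneg this he.le
      -- conclude
      have hgle : g t₁ ≤ g t₀ :=
        hganti ⟨le_rfl, ht₀₁.le⟩ ⟨ht₀₁.le, le_rfl⟩ ht₀₁.le
      have hgt₀ : g t₀ = u t₀ * (δ + 2 * (T - t₀)) - 1 := by
        simp [hgdef, hwdef, hUdef, intervalIntegral.integral_same]
      have hg₁neg : g t₁ < 0 := by rw [hgt₀] at hgle; exact lt_of_le_of_lt hgle hw₀
      have hw₁neg : w t₁ < 0 := by
        by_contra h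
        push_neg at h
        exact absurd (mul_nonneg h (Real.exp_pos _).le) (not_le.2 hg₁neg)
      have hu₁ : 0 ≤ u t₁ := hnonneg _ ⟨le_trans ht₀.1 ht₁.1, ht₁.2⟩
      have hTt₁ : 0 ≤ T - t₁ := by linarith [ht₁.2]
      have : u t₁ * (δ + 2 * (T - t₁)) - 1 < 0 := hw₁neg
      nlinarith
    -- blow-up contradiction
    have hev : ∀ᶠ s in nhdsWithin T (Set.Iio T), 1 / δ < u s :=
      hblow.eventually (eventually_gt_atTop _)
    have hmem : Set.Ioo t₀ T ∈ nhdsWithin T (Set.Iio T) :=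
      Ioo_mem_nhdsLT_of_mem (right_mem_Ioc.2 ht₀.2)
    have : NeBot (nhdsWithin T (Set.Iio T)) := _root_.nhdsLT_neBot T
    obtain ⟨s, hs1, hs2⟩ := (hev.and (eventually_of_mem hmem (fun x hx => hx))).exists
    have := main s ⟨hs2.1.le, hs2.2⟩
    have h1 : 1 < u s * δ := by
      rw [div_lt_iff₀ hδ] at hs1
      linarith
    linarith
  intro t ht
  refine ⟨key t ht, ?_⟩
  have := Real.sqrt_le_sqrt (key t ht)
  rwa [one_div, Real.sqrt_inv, ← one_div] at this
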